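/- arXiv:1112.0765 — 2 statements merged into one kernel-verified Lean document; each statement's English description precedes it below -/
import Mathlib

section
/- Let G be a simple graph with Laplacian L_G, and for each vertex i let L_{i,r} be the principal submatrix of L_G indexed by the set N_{i,r} of vertices at graph distance at most r from i, with the row/column of i placed first. Then for every k ≤ 2r+1, the k-th Laplacian spectral moment satisfies m_k(L_G) = (1/n)·∑_{i=1}^n [L_{i,r}^k]_{1,1}. -/
open Classical

open Matrix

private lemma dist_triangle_reach {V : Type*} {G : SimpleGraph V} {u v w : V}
    (h1 : G.Reachable u v) (h2 : G.Reachable v w) :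
    G.dist u w ≤ G.dist u v + G.dist v w := by
  obtain ⟨p, hp⟩ := h1.exists_walk_length_eq_dist
  obtain ⟨q, hq⟩ := h2.exists_walk_length_eq_dist
  rw [← hp, ← hq, ← SimpleGraph.Walk.length_append]
  apply SimpleGraph.dist_le

private lemma lap_ne_zero {n : ℕ} (G : SimpleGraph (Fin n)) [DecidableRel G.Adj]
    {a b : Fin n} (h : G.lapMatrix ℝ a b ≠ 0) : a = b ∨ G.Adj a b := by
  by_contra hc
  push_neg at hc
  apply h
  simp [SimpleGraph.lapMatrix, SimpleGraph.degMatrix, Matrix.sub_apply, hc.1, hc.2]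

private lemma lap_reach_dist {n : ℕ} (G : SimpleGraph (Fin n)) [DecidableRel G.Adj]
    {a b : Fin n} (h : G.lapMatrix ℝ a b ≠ 0) : G.Reachable a b ∧ G.dist a b ≤ 1 := by
  rcases lap_ne_zero G h with rfl | hadj
  · exact ⟨SimpleGraph.Reachable.refl a, by simp [SimpleGraph.dist_self]⟩
  · exact ⟨hadj.reachable, by simpa using SimpleGraph.dist_le hadj.toWalk⟩

private lemma pow_ne_zero_dist {n : ℕ} (G : SimpleGraph (Fin n)) [DecidableRel G.Adj]
    {m : ℕ} {a b : Fin n} (h : (G.lapMatrix ℝ ^ m) a b ≠ 0) :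
    G.Reachable a b ∧ G.dist a b ≤ m := by
  induction m generalizing b with
  | zero =>
    simp only [pow_zero, Matrix.one_apply, ne_eq, ite_eq_right_iff, Classical.not_imp] at h
    rcases h with ⟨rfl, -⟩
    exact ⟨SimpleGraph.Reachable.refl a, by simp [SimpleGraph.dist_self]⟩
  | succ m ih =>
    rw [pow_succ, Matrix.mul_apply] at h
    obtain ⟨d, -, hd⟩ := Finset.exists_ne_zero_of_sum_ne_zero h
    have h1 : (G.lapMatrix ℝ ^ m) a d ≠ 0 := left_ne_zero_of_mul hd
    have h2 : G.lapMatrix ℝ d b ≠ 0 := right_ne_zero_of_mul hd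
    obtain ⟨hr1, hd1⟩ := ih h1
    obtain ⟨hr2, hd2⟩ := lap_reach_dist G h2
    refine ⟨hr1.trans hr2, ?_⟩
    calc G.dist a b ≤ G.dist a d + G.dist d b := dist_triangle_reach hr1 hr2
      _ ≤ m + 1 := Nat.add_le_add hd1 hd2

private lemma key {n : ℕ} (G : SimpleGraph (Fin n)) [DecidableRel G.Adj] (i : Fin n) (r : ℕ) :
    ∀ m (a b : Fin n) (hra : G.Reachable i a) (hrb : G.Reachable i b)
      (ha : G.dist i a ≤ r) (hb : G.dist i b ≤ r),
      G.dist i a + G.dist i b + m ≤ 2 * r + 1 →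
    ((G.lapMatrix ℝ).submatrix
        (fun x : {j : Fin n // G.Reachable i j ∧ G.dist i j ≤ r} => (x : Fin n))
        (fun x : {j : Fin n // G.Reachable i j ∧ G.dist i j ≤ r} => (x : Fin n)) ^ m)
      ⟨a, hra, ha⟩ ⟨b, hrb, hb⟩ = (G.lapMatrix ℝ ^ m) a b := by
  intro m
  induction m with
  | zero =>
    intro a b hra hrb ha hb _
    simp only [pow_zero, Matrix.one_apply, Subtype.mk.injEq]
  | succ m ih =>
    intro a b hra hrb ha hb hm
    rw [pow_succ', pow_succ', Matrix.mul_apply, Matrix.mul_apply]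
    have hstep : ∀ c : {j : Fin n // G.Reachable i j ∧ G.dist i j ≤ r},
        ((G.lapMatrix ℝ).submatrix
            (fun x : {j : Fin n // G.Reachable i j ∧ G.dist i j ≤ r} => (x : Fin n))
            (fun x : {j : Fin n // G.Reachable i j ∧ G.dist i j ≤ r} => (x : Fin n)))
            ⟨a, hra, ha⟩ c *
          ((G.lapMatrix ℝ).submatrix
            (fun x : {j : Fin n // G.Reachable i j ∧ G.dist i j ≤ r} => (x : Fin n))
            (fun x : {j : Fin n // G.Reachable i j ∧ G.dist i j ≤ r} => (x : Fin n)) ^ m)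
            c ⟨b, hrb, hb⟩ =
        G.lapMatrix ℝ a (c : Fin n) * (G.lapMatrix ℝ ^ m) (c : Fin n) b := by
      intro c
      rw [Matrix.submatrix_apply]
      by_cases hc : G.lapMatrix ℝ a (c : Fin n) = 0
      · rw [hc, zero_mul, zero_mul]
      · congr 1
        obtain ⟨hrc, hdc⟩ := lap_reach_dist G hc
        have hdic : G.dist i (c : Fin n) ≤ G.dist i a + 1 :=
          le_trans (dist_triangle_reach hra hrc) (Nat.add_le_add_left hdc _)
        have := ih (c : Fin n) b c.2.1 hrb c.2.2 hb (by omega)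
        simpa using this
    rw [Finset.sum_congr rfl (fun c _ => hstep c)]
    -- now compare subtype sum with full sum
    have hvanish : ∀ c : Fin n, ¬ (G.Reachable i c ∧ G.dist i c ≤ r) →
        G.lapMatrix ℝ a c * (G.lapMatrix ℝ ^ m) c b = 0 := by
      intro c hc
      by_contra hne
      have h1 : G.lapMatrix ℝ a c ≠ 0 := left_ne_zero_of_mul hne
      have h2 : (G.lapMatrix ℝ ^ m) c b ≠ 0 := right_ne_zero_of_mul hne
      obtain ⟨hrac, hdac⟩ := lap_reach_dist G h1
      obtain ⟨hrcb, hdcb⟩ := pow_ne_zero_dist G h2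
      apply hc
      have hric : G.Reachable i c := hra.trans hrac
      refine ⟨hric, ?_⟩
      have e1 : G.dist i c ≤ G.dist i a + 1 :=
        le_trans (dist_triangle_reach hra hrac) (Nat.add_le_add_left hdac _)
      have e2 : G.dist i c ≤ G.dist i b + m := by
        have := dist_triangle_reach hrb hrcb.symm
        have h3 : G.dist b c = G.dist c b := SimpleGraph.dist_comm
        omega
      omega
    rw [← Finset.sum_subtype (Finset.univ.filter
        (fun c : Fin n => G.Reachable i c ∧ G.dist i c ≤ r))
        (fun c => by simp) (fun c => G.lapMatrix ℝ a c * (G.lapMatrix ℝ ^ m) c b)]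
    rw [Finset.sum_filter_of_ne (fun c _ h => by by_contra hc; exact h (hvanish c hc))]

/-- The `k`-th Laplacian spectral moment of a simple graph `G` on `n` vertices can be computed
from the local Laplacian submatrices: for `k ≤ 2r + 1`,
`m_k(L_G) = (1/n) ∑ᵢ [L_{i,r}^k]_{11}`, where `L_{i,r}` is the principal submatrix of the
Laplacian indexed by the radius-`r` neighborhood `N_{i,r}` of `i`, with the entry of `i`
selected on the diagonal. -/
theorem moments_from_local_submatrices {n : ℕ} (G : SimpleGraph (Fin n)) [DecidableRel G.Adj]
    (r k : ℕ) (hk : k ≤ 2 * r + 1) :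
    (1 / n : ℝ) * Matrix.trace (G.lapMatrix ℝ ^ k) =
      (1 / n : ℝ) * ∑ i : Fin n,
        (((G.lapMatrix ℝ).submatrix
            (fun a : {j : Fin n // G.Reachable i j ∧ G.dist i j ≤ r} => (a : Fin n))
            (fun a : {j : Fin n // G.Reachable i j ∧ G.dist i j ≤ r} => (a : Fin n)) ^ k)
          ⟨i, SimpleGraph.Reachable.refl i, by rw [SimpleGraph.dist_self]; exact Nat.zero_le r⟩
          ⟨i, SimpleGraph.Reachable.refl i, by rw [SimpleGraph.dist_self]; exact Nat.zero_le r⟩) := by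
  congr 1
  rw [Matrix.trace]
  apply Finset.sum_congr rfl
  intro i _
  rw [Matrix.diag_apply]
  exact (key G i r k i i (SimpleGraph.Reachable.refl i) (SimpleGraph.Reachable.refl i)
    (by rw [SimpleGraph.dist_self]; exact Nat.zero_le r)
    (by rw [SimpleGraph.dist_self]; exact Nat.zero_le r)
    (by rw [SimpleGraph.dist_self]; omega)).symm
end

section
/- Let G be a simple graph and (i,j) a non-edge (respectively edge) of G, and let U and U^± be the principal submatrices of L_G and of L_{G±(i,j)} indexed by N_{i,r} ∪ N_{j,r}. Then for every k ≤ 2r+1, the change in the k-th Laplacian spectral moment satisfies m_k(L_{G±(i,j)}) − m_k(L_G) = (1/n)·(Trace((U^±)^k) − Trace(U^k)). -/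
open Classical
open Matrix

def nbhd {n : ℕ} (G : SimpleGraph (Fin n)) (i : Fin n) (r : ℕ) : Set (Fin n) :=
  {v | G.Reachable i v ∧ G.dist i v ≤ r}

namespace MomentAux

variable {n : ℕ}

lemma nbhd_mono {G : SimpleGraph (Fin n)} {x : Fin n} {a b : ℕ} (h : a ≤ b) :
    nbhd G x a ⊆ nbhd G x b := fun v hv => ⟨hv.1, hv.2.trans h⟩

lemma self_mem_nbhd {G : SimpleGraph (Fin n)} {x : Fin n} {m : ℕ} : x ∈ nbhd G x m :=
  ⟨SimpleGraph.Reachable.refl x, by simp [SimpleGraph.dist_self]⟩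

lemma nbhd_adj {G : SimpleGraph (Fin n)} {x z w : Fin n} {m : ℕ}
    (hz : z ∈ nbhd G x m) (h : G.Adj z w) : w ∈ nbhd G x (m + 1) := by
  obtain ⟨hr, hd⟩ := hz
  obtain ⟨p, hp⟩ := hr.exists_walk_length_eq_dist
  refine ⟨⟨p.concat h⟩, ?_⟩
  have h1 : G.dist x w ≤ (p.concat h).length := SimpleGraph.dist_le _
  rw [SimpleGraph.Walk.length_concat] at h1
  omega

/-- `M` only "steps" along edges of `G` or stays put or jumps within the base set `W 0`. -/
def Step (W : ℕ → Set (Fin n)) (M : Matrix (Fin n) (Fin n) ℝ) : Prop :=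
  ∀ w z : Fin n, M w z ≠ 0 → ∀ m : ℕ,
    (z ∈ W m → w ∈ W (m + 1)) ∧ (w ∈ W m → z ∈ W (m + 1))

section Abstract

variable (W : ℕ → Set (Fin n)) (hmono : ∀ ⦃a b : ℕ⦄, a ≤ b → W a ⊆ W b)
variable (M : Matrix (Fin n) (Fin n) ℝ)

lemma supp_col (hM : Step W M) {u : Fin n} (hu0 : u ∈ W 0) :
    ∀ (t : ℕ) (w : Fin n), (M ^ t) w u ≠ 0 → w ∈ W t := by
  intro t
  induction t with
  | zero =>
    intro w h
    rw [pow_zero] at h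
    have hwu : w = u := by
      by_contra hne
      rw [Matrix.one_apply_ne hne] at h
      exact h rfl
    exact hwu ▸ hu0
  | succ t ih =>
    intro w h
    rw [pow_succ', Matrix.mul_apply] at h
    obtain ⟨z, _, hz⟩ := Finset.exists_ne_zero_of_sum_ne_zero h
    exact (hM w z (left_ne_zero_of_mul hz) t).1 (ih z (right_ne_zero_of_mul hz))

lemma supp_row (hM : Step W M) {v : Fin n} (hv0 : v ∈ W 0) :
    ∀ (c : ℕ) (z : Fin n), (M ^ c) v z ≠ 0 → z ∈ W c := by
  intro c
  induction c with
  | zero =>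
    intro z h
    rw [pow_zero] at h
    have hvz : v = z := by
      by_contra hne
      rw [Matrix.one_apply_ne hne] at h
      exact h rfl
    exact hvz ▸ hv0
  | succ c ih =>
    intro z h
    rw [pow_succ, Matrix.mul_apply] at h
    obtain ⟨y, _, hy⟩ := Finset.exists_ne_zero_of_sum_ne_zero h
    exact (hM y z (right_ne_zero_of_mul hy) c).2 (ih y (left_ne_zero_of_mul hy))


variable (r : ℕ)

/-- For `t ≤ r`, entries of powers of the submatrix on `W r` in the column of a
base vertex `u ∈ W 0` agree with entries of powers of the full matrix. -/
lemma sub_pow_col [Fintype ↥(W r)] (hmono : ∀ ⦃a b : ℕ⦄, a ≤ b → W a ⊆ W b) (hM : Step W M)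
    {u : Fin n} (hu0 : u ∈ W 0) (hu : u ∈ W r) :
    ∀ (t : ℕ), t ≤ r → ∀ (w : Fin n) (hw : w ∈ W r),
      ((M.submatrix ((↑) : ↥(W r) → Fin n) ((↑) : ↥(W r) → Fin n)) ^ t) ⟨w, hw⟩ ⟨u, hu⟩
        = (M ^ t) w u := by
  intro t
  induction t with
  | zero =>
    intro ht w hw
    rw [pow_zero, pow_zero]
    simp [Matrix.one_apply, Subtype.ext_iff]
  | succ t ih =>
    intro ht w hw
    rw [pow_succ', pow_succ', Matrix.mul_apply, Matrix.mul_apply]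
    have ht' : t ≤ r := by omega
    calc ∑ z : ↥(W r),
          (M.submatrix ((↑) : ↥(W r) → Fin n) ((↑) : ↥(W r) → Fin n)) ⟨w, hw⟩ z *
            ((M.submatrix ((↑) : ↥(W r) → Fin n) ((↑) : ↥(W r) → Fin n)) ^ t) z ⟨u, hu⟩
        = ∑ z : ↥(W r), M w ↑z * (M ^ t) ↑z u := by
          refine Finset.sum_congr rfl fun z _ => ?_
          have := ih ht' ↑z z.2
          rw [Subtype.coe_eta] at this
          rw [this]
          rfl
      _ = ∑ z ∈ (W r).toFinset, M w z * (M ^ t) z u :=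
          Finset.sum_set_coe (f := fun z => M w z * (M ^ t) z u) (W r)
      _ = ∑ z : Fin n, M w z * (M ^ t) z u := by
          refine Finset.sum_subset (Finset.subset_univ _) fun z _ hz => ?_
          have hzW : z ∉ W r := fun h => hz (Set.mem_toFinset.mpr h)
          have h0 : (M ^ t) z u = 0 := by
            by_contra h
            exact hzW (hmono ht' (supp_col W M hM hu0 t z h))
          rw [h0, mul_zero]

/-- For `c + m ≤ 2r` and `w ∈ W m`, entries of powers of the full matrix in the row of a
base vertex `v ∈ W 0` agree with entries of powers of the submatrix on `W r`. -/
lemma sub_pow_row [Fintype ↥(W r)] (hmono : ∀ ⦃a b : ℕ⦄, a ≤ b → W a ⊆ W b) (hM : Step W M)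
    {v : Fin n} (hv0 : v ∈ W 0) (hv : v ∈ W r) :
    ∀ (c m : ℕ) (w : Fin n), c + m ≤ 2 * r → w ∈ W m → ∀ (hw : w ∈ W r),
      (M ^ c) v w
        = ((M.submatrix ((↑) : ↥(W r) → Fin n) ((↑) : ↥(W r) → Fin n)) ^ c) ⟨v, hv⟩ ⟨w, hw⟩ := by
  intro c
  induction c with
  | zero =>
    intro m w hcm hwm hw
    rw [pow_zero, pow_zero]
    simp [Matrix.one_apply, Subtype.ext_iff]
  | succ c ih =>
    intro m w hcm hwm hw
    rw [pow_succ, pow_succ, Matrix.mul_apply, Matrix.mul_apply]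
    calc ∑ z : Fin n, (M ^ c) v z * M z w
        = ∑ z ∈ (W r).toFinset, (M ^ c) v z * M z w := by
          refine (Finset.sum_subset (Finset.subset_univ _) fun z _ hz => ?_).symm
          have hzW : z ∉ W r := fun h => hz (Set.mem_toFinset.mpr h)
          by_cases hMz : M z w = 0
          · rw [hMz, mul_zero]
          · have hzm : z ∈ W (m + 1) := (hM z w hMz m).1 hwm
            have hmr : r ≤ m := by
              by_contra hc
              exact hzW (hmono (by omega : m + 1 ≤ r) hzm)
            have hcr : c ≤ r := by omega
            have h0 : (M ^ c) v z = 0 := by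
              by_contra h
              exact hzW (hmono hcr (supp_row W M hM hv0 c z h))
            rw [h0, zero_mul]
      _ = ∑ z : ↥(W r), (M ^ c) v ↑z * M ↑z w :=
          (Finset.sum_set_coe (f := fun z => (M ^ c) v z * M z w) (W r)).symm
      _ = ∑ z : ↥(W r),
            ((M.submatrix ((↑) : ↥(W r) → Fin n) ((↑) : ↥(W r) → Fin n)) ^ c) ⟨v, hv⟩ z *
              (M.submatrix ((↑) : ↥(W r) → Fin n) ((↑) : ↥(W r) → Fin n)) z ⟨w, hw⟩ := by
          refine Finset.sum_congr rfl fun z _ => ?_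
          by_cases hMz : M ↑z w = 0
          · show (M ^ c) v ↑z * M ↑z w = _ * M ↑z w
            rw [hMz, mul_zero, mul_zero]
          · have hzm : (↑z : Fin n) ∈ W (m + 1) := (hM ↑z w hMz m).1 hwm
            have := ih (m + 1) ↑z (by omega) hzm z.2
            rw [Subtype.coe_eta] at this
            show (M ^ c) v ↑z * M ↑z w = _ * M ↑z w
            rw [this]


lemma mixed_entry_half [Fintype ↥(W r)] (A B : Matrix (Fin n) (Fin n) ℝ)
    (hmono : ∀ ⦃a b : ℕ⦄, a ≤ b → W a ⊆ W b) (hA : Step W A) (hB : Step W B)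
    {u v : Fin n} (hu0 : u ∈ W 0) (hv0 : v ∈ W 0) (hu : u ∈ W r) (hv : v ∈ W r)
    (c t : ℕ) (ht : t ≤ r) (hct : c + t ≤ 2 * r) :
    (B ^ c * A ^ t) v u
      = ((B.submatrix ((↑) : ↥(W r) → Fin n) ((↑) : ↥(W r) → Fin n)) ^ c *
          (A.submatrix ((↑) : ↥(W r) → Fin n) ((↑) : ↥(W r) → Fin n)) ^ t) ⟨v, hv⟩ ⟨u, hu⟩ := by
  rw [Matrix.mul_apply, Matrix.mul_apply]
  refine Eq.symm ?_
  calc ∑ z : ↥(W r),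
        ((B.submatrix ((↑) : ↥(W r) → Fin n) ((↑) : ↥(W r) → Fin n)) ^ c) ⟨v, hv⟩ z *
          ((A.submatrix ((↑) : ↥(W r) → Fin n) ((↑) : ↥(W r) → Fin n)) ^ t) z ⟨u, hu⟩
      = ∑ z : ↥(W r), (B ^ c) v ↑z * (A ^ t) ↑z u := by
        refine Finset.sum_congr rfl fun z _ => ?_
        have hA4 : ((A.submatrix ((↑) : ↥(W r) → Fin n) ((↑) : ↥(W r) → Fin n)) ^ t) z ⟨u, hu⟩
            = (A ^ t) ↑z u := by
          have := sub_pow_col W A r hmono hA hu0 hu t ht ↑z z.2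
          rwa [Subtype.coe_eta] at this
        rw [hA4]
        by_cases h : (A ^ t) ↑z u = 0
        · rw [h, mul_zero, mul_zero]
        · have hzWt : (↑z : Fin n) ∈ W t := supp_col W A hA hu0 t ↑z h
          have := sub_pow_row W B r hmono hB hv0 hv c t ↑z hct hzWt z.2
          rw [Subtype.coe_eta] at this
          rw [this]
    _ = ∑ z ∈ (W r).toFinset, (B ^ c) v z * (A ^ t) z u :=
        Finset.sum_set_coe (f := fun z => (B ^ c) v z * (A ^ t) z u) (W r)
    _ = ∑ z : Fin n, (B ^ c) v z * (A ^ t) z u := by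
        refine Finset.sum_subset (Finset.subset_univ _) fun z _ hz => ?_
        have hzW : z ∉ W r := fun h => hz (Set.mem_toFinset.mpr h)
        have h0 : (A ^ t) z u = 0 := by
          by_contra h
          exact hzW (hmono ht (supp_col W A hA hu0 t z h))
        rw [h0, mul_zero]

lemma mixed_entry [Fintype ↥(W r)] (A B : Matrix (Fin n) (Fin n) ℝ)
    (hmono : ∀ ⦃a b : ℕ⦄, a ≤ b → W a ⊆ W b) (hA : Step W A) (hB : Step W B)
    (hAs : Aᵀ = A) (hBs : Bᵀ = B)
    {u v : Fin n} (hu0 : u ∈ W 0) (hv0 : v ∈ W 0) (hu : u ∈ W r) (hv : v ∈ W r)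
    (c t : ℕ) (hct : c + t ≤ 2 * r) :
    (B ^ c * A ^ t) v u
      = ((B.submatrix ((↑) : ↥(W r) → Fin n) ((↑) : ↥(W r) → Fin n)) ^ c *
          (A.submatrix ((↑) : ↥(W r) → Fin n) ((↑) : ↥(W r) → Fin n)) ^ t) ⟨v, hv⟩ ⟨u, hu⟩ := by
  rcases le_or_gt t r with ht | ht
  · exact mixed_entry_half W r A B hmono hA hB hu0 hv0 hu hv c t ht hct
  · have hc : c ≤ r := by omega
    have e1 : (B ^ c * A ^ t) v u = (A ^ t * B ^ c) u v := by
      calc (B ^ c * A ^ t) v u = ((B ^ c * A ^ t)ᵀ) u v := (Matrix.transpose_apply _ u v).symm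
        _ = ((A ^ t)ᵀ * (B ^ c)ᵀ) u v := by rw [Matrix.transpose_mul]
        _ = (A ^ t * B ^ c) u v := by rw [Matrix.transpose_pow, Matrix.transpose_pow, hAs, hBs]
    have hAsub : (A.submatrix ((↑) : ↥(W r) → Fin n) ((↑) : ↥(W r) → Fin n))ᵀ
        = A.submatrix ((↑) : ↥(W r) → Fin n) ((↑) : ↥(W r) → Fin n) := by
      rw [Matrix.transpose_submatrix, hAs]
    have hBsub : (B.submatrix ((↑) : ↥(W r) → Fin n) ((↑) : ↥(W r) → Fin n))ᵀ
        = B.submatrix ((↑) : ↥(W r) → Fin n) ((↑) : ↥(W r) → Fin n) := by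
      rw [Matrix.transpose_submatrix, hBs]
    have e2 : ((B.submatrix ((↑) : ↥(W r) → Fin n) ((↑) : ↥(W r) → Fin n)) ^ c *
          (A.submatrix ((↑) : ↥(W r) → Fin n) ((↑) : ↥(W r) → Fin n)) ^ t) ⟨v, hv⟩ ⟨u, hu⟩
        = ((A.submatrix ((↑) : ↥(W r) → Fin n) ((↑) : ↥(W r) → Fin n)) ^ t *
            (B.submatrix ((↑) : ↥(W r) → Fin n) ((↑) : ↥(W r) → Fin n)) ^ c) ⟨u, hu⟩ ⟨v, hv⟩ := by
      rw [← Matrix.transpose_apply (((A.submatrix ((↑) : ↥(W r) → Fin n) ((↑) : ↥(W r) → Fin n)) ^ t *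
            (B.submatrix ((↑) : ↥(W r) → Fin n) ((↑) : ↥(W r) → Fin n)) ^ c)) ⟨v, hv⟩ ⟨u, hu⟩,
          Matrix.transpose_mul, Matrix.transpose_pow, Matrix.transpose_pow, hAsub, hBsub]
    rw [e1, e2]
    exact mixed_entry_half W r B A hmono hB hA hv0 hu0 hv hu t c hc (by omega)

end Abstract

section Telescope

variable {m : Type*} [Fintype m] [DecidableEq m]

lemma pow_sub_pow (A B : Matrix m m ℝ) :
    ∀ k : ℕ, A ^ k - B ^ k = ∑ t ∈ Finset.range k, A ^ t * (A - B) * B ^ (k - 1 - t)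
  | 0 => by simp
  | k + 1 => by
    rw [Finset.sum_range_succ']
    have IH := pow_sub_pow A B k
    have h1 : A ^ (k + 1) - B ^ (k + 1) = A * (A ^ k - B ^ k) + (A - B) * B ^ k := by
      rw [pow_succ', pow_succ', mul_sub, sub_mul]
      abel
    rw [h1, IH, Finset.mul_sum]
    have h2 : ∀ t ∈ Finset.range k,
        A * (A ^ t * (A - B) * B ^ (k - 1 - t)) = A ^ (t + 1) * (A - B) * B ^ (k + 1 - 1 - (t + 1)) := by
      intro t htk
      have : k + 1 - 1 - (t + 1) = k - 1 - t := by omega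
      rw [this]
      simp only [pow_succ', mul_assoc]
    rw [Finset.sum_congr rfl h2]
    congr 1
    simp

lemma trace_pow_sub (A B : Matrix m m ℝ) (k : ℕ) :
    trace (A ^ k) - trace (B ^ k)
      = ∑ t ∈ Finset.range k, trace ((A - B) * (B ^ (k - 1 - t) * A ^ t)) := by
  rw [← Matrix.trace_sub, pow_sub_pow, Matrix.trace_sum]
  refine Finset.sum_congr rfl fun t _ => ?_
  rw [Matrix.mul_assoc, Matrix.trace_mul_comm, Matrix.mul_assoc]

end Telescope


section Concrete

variable {n : ℕ} (G G' : SimpleGraph (Fin n)) [DecidableRel G.Adj] [DecidableRel G'.Adj]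
variable (i j : Fin n)

lemma Wf_mono : ∀ ⦃a b : ℕ⦄, a ≤ b →
    (fun m => nbhd G i m ∪ nbhd G j m) a ⊆ (fun m => nbhd G i m ∪ nbhd G j m) b := by
  intro a b hab v hv
  rcases hv with h | h
  · exact Or.inl (nbhd_mono hab h)
  · exact Or.inr (nbhd_mono hab h)

lemma lap_entry_cases (H : SimpleGraph (Fin n)) [DecidableRel H.Adj] :
    ∀ u v : Fin n, H.lapMatrix ℝ u v ≠ 0 → u = v ∨ H.Adj u v := by
  intro u v h
  by_contra hc
  push_neg at hc
  apply h
  simp [SimpleGraph.lapMatrix, SimpleGraph.degMatrix, Matrix.sub_apply,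
    Matrix.diagonal_apply_ne _ hc.1, SimpleGraph.adjMatrix_apply, hc.2]

lemma mem_W0 {u : Fin n} (h : u = i ∨ u = j) : u ∈ (fun m => nbhd G i m ∪ nbhd G j m) 0 := by
  rcases h with h | h
  · exact h ▸ Or.inl self_mem_nbhd
  · exact h ▸ Or.inr self_mem_nbhd

lemma step_lap : Step (fun m => nbhd G i m ∪ nbhd G j m) (G.lapMatrix ℝ) := by
  intro w z h m
  rcases lap_entry_cases G w z h with he | ha
  · subst he
    exact ⟨fun hm => Wf_mono G i j (Nat.le_succ m) hm, fun hm => Wf_mono G i j (Nat.le_succ m) hm⟩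
  · constructor
    · intro hm
      rcases hm with hm | hm
      · exact Or.inl (nbhd_adj hm ha.symm)
      · exact Or.inr (nbhd_adj hm ha.symm)
    · intro hm
      rcases hm with hm | hm
      · exact Or.inl (nbhd_adj hm ha)
      · exact Or.inr (nbhd_adj hm ha)

lemma step_lap' (hdiff : ∀ u v : Fin n, ¬(u = i ∧ v = j) → ¬(u = j ∧ v = i) → (G'.Adj u v ↔ G.Adj u v)) : Step (fun m => nbhd G i m ∪ nbhd G j m) (G'.lapMatrix ℝ) := by
  intro w z h m
  rcases lap_entry_cases G' w z h with he | ha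
  · subst he
    exact ⟨fun hm => Wf_mono G i j (Nat.le_succ m) hm, fun hm => Wf_mono G i j (Nat.le_succ m) hm⟩
  · by_cases hsp : (w = i ∧ z = j) ∨ (w = j ∧ z = i)
    · have hw0 : w ∈ (fun m => nbhd G i m ∪ nbhd G j m) 0 :=
        mem_W0 G i j (by tauto)
      have hz0 : z ∈ (fun m => nbhd G i m ∪ nbhd G j m) 0 :=
        mem_W0 G i j (by tauto)
      exact ⟨fun _ => Wf_mono G i j (Nat.zero_le _) hw0, fun _ => Wf_mono G i j (Nat.zero_le _) hz0⟩
    · have hsp1 : ¬(w = i ∧ z = j) := fun hc => hsp (Or.inl hc)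
      have hsp2 : ¬(w = j ∧ z = i) := fun hc => hsp (Or.inr hc)
      have haG : G.Adj w z := (hdiff w z hsp1 hsp2).mp ha
      constructor
      · intro hm
        rcases hm with hm | hm
        · exact Or.inl (nbhd_adj hm haG.symm)
        · exact Or.inr (nbhd_adj hm haG.symm)
      · intro hm
        rcases hm with hm | hm
        · exact Or.inl (nbhd_adj hm haG)
        · exact Or.inr (nbhd_adj hm haG)

lemma lap_eq_outside (hdiff : ∀ u v : Fin n, ¬(u = i ∧ v = j) → ¬(u = j ∧ v = i) → (G'.Adj u v ↔ G.Adj u v)) : ∀ u v : Fin n, (u ≠ i ∧ u ≠ j) ∨ (v ≠ i ∧ v ≠ j) →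
    G'.lapMatrix ℝ u v = G.lapMatrix ℝ u v := by
  intro u v h
  by_cases huv : u = v
  · subst huv
    have hne : u ≠ i ∧ u ≠ j := by tauto
    have hnb : G'.neighborFinset u = G.neighborFinset u := by
      ext w
      simp only [SimpleGraph.mem_neighborFinset]
      exact hdiff u w (fun hc => hne.1 hc.1) (fun hc => hne.2 hc.1)
    have hdeg : G'.degree u = G.degree u := by
      rw [SimpleGraph.degree, SimpleGraph.degree, hnb]
    simp [SimpleGraph.lapMatrix, SimpleGraph.degMatrix, Matrix.sub_apply,
      SimpleGraph.adjMatrix_apply, hdeg]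
  · have h1 : ¬(u = i ∧ v = j) := by tauto
    have h2 : ¬(u = j ∧ v = i) := by tauto
    have hadj : G'.Adj u v ↔ G.Adj u v := hdiff u v h1 h2
    simp [SimpleGraph.lapMatrix, SimpleGraph.degMatrix, Matrix.sub_apply,
      Matrix.diagonal_apply_ne _ huv, SimpleGraph.adjMatrix_apply, hadj]

lemma trace_mul_expand {m' : Type*} [Fintype m'] (D X : Matrix m' m' ℝ) :
    trace (D * X) = ∑ u : m', ∑ v : m', D u v * X v u := by
  simp [Matrix.trace, Matrix.diag, Matrix.mul_apply]

end Concrete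

end MomentAux

/-- Let `G'` be obtained from a simple graph `G` by adding or deleting the single edge `(i,j)`.
Then for `k ≤ 2r + 1`, the change in the `k`-th Laplacian spectral moment equals
`(1/n)(Trace((U')^k) - Trace(U^k))`, where `U` and `U'` are the principal submatrices of the
Laplacians of `G` and `G'` indexed by `N_{i,r} ∪ N_{j,r}`. -/
theorem moment_perturbation_edge {n : ℕ} (G G' : SimpleGraph (Fin n))
    [DecidableRel G.Adj] [DecidableRel G'.Adj] (i j : Fin n) (hij : i ≠ j)
    (hdiff : ∀ u v : Fin n, ¬(u = i ∧ v = j) → ¬(u = j ∧ v = i) → (G'.Adj u v ↔ G.Adj u v))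
    (r k : ℕ) (hk : k ≤ 2 * r + 1) :
    (1 / n : ℝ) * Matrix.trace (G'.lapMatrix ℝ ^ k)
      - (1 / n : ℝ) * Matrix.trace (G.lapMatrix ℝ ^ k) =
      (1 / n : ℝ) *
        (Matrix.trace ((G'.lapMatrix ℝ).submatrix
            (fun a : ↥(nbhd G i r ∪ nbhd G j r) => (a : Fin n))
            (fun a : ↥(nbhd G i r ∪ nbhd G j r) => (a : Fin n)) ^ k)
          - Matrix.trace ((G.lapMatrix ℝ).submatrix
            (fun a : ↥(nbhd G i r ∪ nbhd G j r) => (a : Fin n))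
            (fun a : ↥(nbhd G i r ∪ nbhd G j r) => (a : Fin n)) ^ k)) := by
  classical
  have hmono := MomentAux.Wf_mono G i j
  have hstepB := MomentAux.step_lap G i j
  have hstepA := MomentAux.step_lap' G G' i j hdiff
  have hsymB : (G.lapMatrix ℝ)ᵀ = G.lapMatrix ℝ := G.isSymm_lapMatrix ℝ
  have hsymA : (G'.lapMatrix ℝ)ᵀ = G'.lapMatrix ℝ := G'.isSymm_lapMatrix ℝ
  have hD : ∀ u v : Fin n, (G'.lapMatrix ℝ - G.lapMatrix ℝ) u v ≠ 0 → (u = i ∨ u = j) ∧ (v = i ∨ v = j) := by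
    intro u v h
    by_contra hcon
    have hcase : (u ≠ i ∧ u ≠ j) ∨ (v ≠ i ∧ v ≠ j) := by tauto
    apply h
    rw [Matrix.sub_apply, MomentAux.lap_eq_outside G G' i j hdiff u v hcase, sub_self]
  have hWr : ∀ u : Fin n, u = i ∨ u = j → u ∈ (nbhd G i r ∪ nbhd G j r) :=
    fun u hu => hmono (Nat.zero_le r) (MomentAux.mem_W0 G i j hu)
  rw [← mul_sub]
  congr 1
  rw [MomentAux.trace_pow_sub, MomentAux.trace_pow_sub]
  refine Finset.sum_congr rfl fun t htk => ?_
  rw [Finset.mem_range] at htk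
  have hct : (k - 1 - t) + t ≤ 2 * r := by omega
  rw [MomentAux.trace_mul_expand, MomentAux.trace_mul_expand]
  refine Eq.symm ?_
  calc ∑ a : ↥(nbhd G i r ∪ nbhd G j r), ∑ b : ↥(nbhd G i r ∪ nbhd G j r),
        ((G'.lapMatrix ℝ).submatrix (fun a : ↥(nbhd G i r ∪ nbhd G j r) => (a : Fin n)) (fun a : ↥(nbhd G i r ∪ nbhd G j r) => (a : Fin n)) - (G.lapMatrix ℝ).submatrix (fun a : ↥(nbhd G i r ∪ nbhd G j r) => (a : Fin n)) (fun a : ↥(nbhd G i r ∪ nbhd G j r) => (a : Fin n))) a b * (((G.lapMatrix ℝ).submatrix (fun a : ↥(nbhd G i r ∪ nbhd G j r) => (a : Fin n)) (fun a : ↥(nbhd G i r ∪ nbhd G j r) => (a : Fin n))) ^ (k - 1 - t) * ((G'.lapMatrix ℝ).submatrix (fun a : ↥(nbhd G i r ∪ nbhd G j r) => (a : Fin n)) (fun a : ↥(nbhd G i r ∪ nbhd G j r) => (a : Fin n))) ^ t) b a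
      = ∑ a : ↥(nbhd G i r ∪ nbhd G j r), ∑ b : ↥(nbhd G i r ∪ nbhd G j r), (G'.lapMatrix ℝ - G.lapMatrix ℝ) ↑a ↑b * ((G.lapMatrix ℝ) ^ (k - 1 - t) * (G'.lapMatrix ℝ) ^ t) ↑b ↑a := by
        refine Finset.sum_congr rfl fun a _ => Finset.sum_congr rfl fun b _ => ?_
        by_cases h : (G'.lapMatrix ℝ - G.lapMatrix ℝ) ↑a ↑b = 0
        · show (G'.lapMatrix ℝ - G.lapMatrix ℝ) ↑a ↑b * (((G.lapMatrix ℝ).submatrix (fun a : ↥(nbhd G i r ∪ nbhd G j r) => (a : Fin n)) (fun a : ↥(nbhd G i r ∪ nbhd G j r) => (a : Fin n))) ^ (k - 1 - t) * ((G'.lapMatrix ℝ).submatrix (fun a : ↥(nbhd G i r ∪ nbhd G j r) => (a : Fin n)) (fun a : ↥(nbhd G i r ∪ nbhd G j r) => (a : Fin n))) ^ t) b a = (G'.lapMatrix ℝ - G.lapMatrix ℝ) ↑a ↑b * ((G.lapMatrix ℝ) ^ (k - 1 - t) * (G'.lapMatrix ℝ) ^ t) ↑b ↑a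
          rw [h, zero_mul, zero_mul]
        · obtain ⟨hu2, hv2⟩ := hD ↑a ↑b h
          have hent := MomentAux.mixed_entry (fun m => nbhd G i m ∪ nbhd G j m) r
            (G'.lapMatrix ℝ) (G.lapMatrix ℝ) hmono hstepA hstepB hsymA hsymB
            (MomentAux.mem_W0 G i j hu2) (MomentAux.mem_W0 G i j hv2) a.2 b.2
            (k - 1 - t) t hct
          rw [Subtype.coe_eta, Subtype.coe_eta] at hent
          refine Eq.trans (congrArg (fun x => (G'.lapMatrix ℝ - G.lapMatrix ℝ) (↑a) (↑b) * x) hent.symm) rfl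
    _ = ∑ a : ↥(nbhd G i r ∪ nbhd G j r), ∑ v ∈ (nbhd G i r ∪ nbhd G j r).toFinset, (G'.lapMatrix ℝ - G.lapMatrix ℝ) ↑a v * ((G.lapMatrix ℝ) ^ (k - 1 - t) * (G'.lapMatrix ℝ) ^ t) v ↑a := by
        refine Finset.sum_congr rfl fun a _ => ?_
        exact (Finset.sum_set_coe (f := fun v => (G'.lapMatrix ℝ - G.lapMatrix ℝ) ↑a v * ((G.lapMatrix ℝ) ^ (k - 1 - t) * (G'.lapMatrix ℝ) ^ t) v ↑a) (nbhd G i r ∪ nbhd G j r))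
    _ = ∑ u ∈ (nbhd G i r ∪ nbhd G j r).toFinset, ∑ v ∈ (nbhd G i r ∪ nbhd G j r).toFinset, (G'.lapMatrix ℝ - G.lapMatrix ℝ) u v * ((G.lapMatrix ℝ) ^ (k - 1 - t) * (G'.lapMatrix ℝ) ^ t) v u :=
        Finset.sum_set_coe (f := fun u => ∑ v ∈ (nbhd G i r ∪ nbhd G j r).toFinset, (G'.lapMatrix ℝ - G.lapMatrix ℝ) u v * ((G.lapMatrix ℝ) ^ (k - 1 - t) * (G'.lapMatrix ℝ) ^ t) v u) (nbhd G i r ∪ nbhd G j r)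
    _ = ∑ u ∈ (nbhd G i r ∪ nbhd G j r).toFinset, ∑ v : Fin n, (G'.lapMatrix ℝ - G.lapMatrix ℝ) u v * ((G.lapMatrix ℝ) ^ (k - 1 - t) * (G'.lapMatrix ℝ) ^ t) v u := by
        refine Finset.sum_congr rfl fun u _ => ?_
        refine Finset.sum_subset (Finset.subset_univ _) fun v _ hv => ?_
        have hvS : v ∉ (nbhd G i r ∪ nbhd G j r) := fun h' => hv (Set.mem_toFinset.mpr h')
        by_cases h : (G'.lapMatrix ℝ - G.lapMatrix ℝ) u v = 0
        · rw [h, zero_mul]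
        · exact absurd (hWr v (hD u v h).2) hvS
    _ = ∑ u : Fin n, ∑ v : Fin n, (G'.lapMatrix ℝ - G.lapMatrix ℝ) u v * ((G.lapMatrix ℝ) ^ (k - 1 - t) * (G'.lapMatrix ℝ) ^ t) v u := by
        refine Finset.sum_subset (Finset.subset_univ _) fun u _ hu => ?_
        have huS : u ∉ (nbhd G i r ∪ nbhd G j r) := fun h' => hu (Set.mem_toFinset.mpr h')
        refine Finset.sum_eq_zero fun v _ => ?_
        by_cases h : (G'.lapMatrix ℝ - G.lapMatrix ℝ) u v = 0
        · rw [h, zero_mul]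
        · exact absurd (hWr u (hD u v h).1) huS
end
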